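/- Let A, B be symmetric commuting n×n real matrices such that max{⟨A·B·x, x⟩ : ⟨x,x⟩ = 1} ≤ 0 (i.e., A·B is negative semidefinite). Then Id - t·A·B is invertible for all t ≥ 0, so the solution X(t) = A·(Id - t·A·B)⁻¹ of the ODE X' = B·X·X exists for all forward time. -/

import Mathlib

open Matrix

/-- If `A, B` are symmetric commuting matrices and `A*B` is negative semidefinite, then
`Id - t • A*B` is invertible for all `t ≥ 0`, so the solution `X(t) = A (Id - t A B)⁻¹`
exists for all forward time. -/
theorem eternal_of_negSemidef {n : ℕ} (A B : Matrix (Fin n) (Fin n) ℝ)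
    (hA : A.IsSymm) (hB : B.IsSymm) (hAB : A * B = B * A)
    (hneg : ∀ x : Fin n → ℝ, (A * B).mulVec x ⬝ᵥ x ≤ 0) :
    ∀ t : ℝ, 0 ≤ t → IsUnit (1 - t • (A * B)) := by
  intro t ht
  have hsym : (A * B).IsSymm := by
    unfold Matrix.IsSymm at *
    rw [transpose_mul, hA, hB, hAB]
  have hpd : (1 - t • (A * B)).PosDef := by
    rw [posDef_iff_dotProduct_mulVec]
    constructor
    · show (1 - t • (A * B))ᴴ = _
      have h : (A * B)ᴴ = A * B := by
        ext i j
        simpa [conjTranspose_apply] using congrFun (congrFun hsym i) j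
      rw [conjTranspose_sub, conjTranspose_smul, h]
      simp
    · intro x hx
      have h2 : x ⬝ᵥ (A * B).mulVec x ≤ 0 := by
        rw [dotProduct_comm]; exact hneg x
      have h3 : 0 < x ⬝ᵥ x := by
        rcases lt_or_eq_of_le (Finset.sum_nonneg fun i _ => mul_self_nonneg (x i)) with h | h
        · exact h
        · exact absurd (dotProduct_self_eq_zero.mp h.symm) hx
      have hs : star x = x := by ext i; simp
      rw [hs]
      simp only [RCLike.re_to_real, sub_mulVec, dotProduct_sub, one_mulVec,
        smul_mulVec, dotProduct_smul, smul_eq_mul]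
      nlinarith
  exact hpd.isUnit
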